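/- For all infinite cardinals κ ≤ λ with κ regular, any cofinal family in the eventual domination order on ^λκ has cardinality at least λ⁺; that is, cf(⟨^λκ, ≤*⟩) ≥ λ⁺, where f ≤* g iff there exists α < λ such that f(β) ≤ g(β) for all β ≥ α. -/

import Mathlib

open Cardinal Order

/-- The cofinality of the everywhere (pointwise) domination order on functions `X → K`. -/
noncomputable def everyCof (X K : Type*) [LE K] : Cardinal :=
  sInf {c | ∃ D : Set (X → K), #D = c ∧ ∀ f : X → K, ∃ g ∈ D, ∀ x, f x ≤ g x}

/-- The cofinality of the eventual domination order on functions `X → K`. -/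
noncomputable def evenCof (X K : Type*) [LE X] [LE K] : Cardinal :=
  sInf {c | ∃ D : Set (X → K), #D = c ∧
    ∀ f : X → K, ∃ g ∈ D, ∃ a : X, ∀ b : X, a ≤ b → f b ≤ g b}

theorem stmt_1 (k l : Cardinal) (hkl : k ≤ l) (hl : ℵ₀ ≤ l) (hreg : k.IsRegular) :
    Order.succ l ≤ evenCof l.ord.ToType k.ord.ToType := by
  classical
  have hk0 : ℵ₀ ≤ k := hreg.aleph0_le
  set T := l.ord.ToType with hT
  set K := k.ord.ToType with hK
  have hmkT : #T = l := by rw [hT, mk_toType, card_ord]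
  have hKne : Nonempty K := by
    rw [hK, Ordinal.toType_nonempty_iff_ne_zero]
    simpa using (aleph0_pos.trans_le hk0).ne'
  have hTne : Nonempty T := by
    rw [hT, Ordinal.toType_nonempty_iff_ne_zero]
    simpa using (aleph0_pos.trans_le hl).ne'
  have hnomax : NoMaxOrder K := Cardinal.noMaxOrder hk0
  apply le_csInf
  · refine ⟨#(Set.univ : Set (T → K)), Set.univ, rfl, fun f => ?_⟩
    exact ⟨f, Set.mem_univ f, Classical.arbitrary T, fun b _ => le_rfl⟩
  rintro c ⟨D, hD, hdom⟩
  rw [Order.succ_le_iff]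
  by_contra hc
  have hcl : c ≤ l := not_lt.mp hc
  -- D is nonempty
  obtain ⟨g₀, hg₀, -⟩ := hdom (fun _ => Classical.arbitrary K)
  have hDne : Nonempty ↥D := ⟨⟨g₀, hg₀⟩⟩
  -- embedding of D into T
  have hle : #↥D ≤ #T := by rw [hD, hmkT]; exact hcl
  obtain ⟨e⟩ := (Cardinal.le_def ↥D T).mp hle
  have sur : Function.Surjective (Function.invFun e) :=
    Function.invFun_surjective e.injective
  -- equiv T ≃ T × T
  have hprod : #T = #(T × T) := by
    simp [Cardinal.mk_prod, hmkT, Cardinal.mul_eq_self hl]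
  obtain ⟨φ⟩ := Cardinal.eq.mp hprod
  set idx : T → ↥D := fun t => Function.invFun e (φ t).1 with hidx
  set f : T → K := fun t => Classical.choose (exists_gt ((idx t).val t)) with hf
  have hfgt : ∀ t : T, (idx t).val t < f t := fun t =>
    Classical.choose_spec (exists_gt ((idx t).val t))
  obtain ⟨g, hg, a, ha⟩ := hdom f
  obtain ⟨i, hi⟩ := sur ⟨g, hg⟩
  -- find b ≥ a with (φ b).1 = i
  have hb : ∃ b : T, a ≤ b ∧ (φ b).1 = i := by
    by_contra hno
    push_neg at hno
    have hlt : ∀ t : T, φ.symm (i, t) < a := by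
      intro t
      by_contra hge
      exact hno _ (not_lt.mp hge) (by rw [φ.apply_symm_apply])
    have hinj : Function.Injective (fun t : T => (⟨φ.symm (i, t), hlt t⟩ : {y : T // y < a})) := by
      intro x y hxy
      have h : φ.symm (i, x) = φ.symm (i, y) := congrArg Subtype.val hxy
      exact (Prod.ext_iff.mp (φ.symm.injective h)).2
    have h2 : #T ≤ #{y : T // y < a} := Cardinal.mk_le_of_injective hinj
    rw [hmkT] at h2
    have h3 : #{y : T // y < a} < l := Cardinal.mk_Iio_ord_toType a
    exact absurd (h2.trans_lt h3) (lt_irrefl l)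
  obtain ⟨b, hab, hbi⟩ := hb
  have hidxb : idx b = ⟨g, hg⟩ := by rw [hidx]; simp only [hbi]; exact hi
  have h1 : g b < f b := by
    have := hfgt b
    rwa [hidxb] at this
  exact absurd (ha b hab) (not_le.mpr h1)
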